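/- Let ρ and σ be density matrices on ℂ^(d_1) ⊗ ... ⊗ ℂ^(d_n), and let s_k denote the swap operator exchanging the k-th tensor factor of the first copy with the k-th tensor factor of the second copy in (⊗_i ℂ^(d_i)) ⊗ (⊗_i ℂ^(d_i)). Then for any a = (a_1,...,a_n) ∈ {0,1}^n, Tr[(s_1^(a_1) ⊗ s_2^(a_2) ⊗ ... ⊗ s_n^(a_n))(ρ ⊗ σ)] = Tr(ρ_S σ_S), where S = supp(a). -/

import Mathlib

open Finset ComplexOrder

noncomputable def ptrace {n : ℕ} (d : Fin n → ℕ) (S : Finset (Fin n))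
    (ρ : Matrix ((i : Fin n) → Fin (d i)) ((i : Fin n) → Fin (d i)) ℂ) :
    Matrix ((i : {j : Fin n // j ∈ S}) → Fin (d i.1))
           ((i : {j : Fin n // j ∈ S}) → Fin (d i.1)) ℂ :=
  fun x y => ∑ z : (i : {j : Fin n // j ∉ S}) → Fin (d i.1),
    ρ (fun i => if h : i ∈ S then x ⟨i, h⟩ else z ⟨i, h⟩)
      (fun i => if h : i ∈ S then y ⟨i, h⟩ else z ⟨i, h⟩)

/-- `Tr(ρ_S σ_S)`, the overlap of the reduced states on `S`. -/
noncomputable def overlap {n : ℕ} (d : Fin n → ℕ) (S : Finset (Fin n))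
    (ρ σ : Matrix ((i : Fin n) → Fin (d i)) ((i : Fin n) → Fin (d i)) ℂ) : ℂ :=
  (ptrace d S ρ * ptrace d S σ).trace

/-- A density matrix: positive semidefinite with unit trace. -/
def IsDensity {m : Type*} [Fintype m] [DecidableEq m] (ρ : Matrix m m ℂ) : Prop :=
  ρ.PosSemidef ∧ ρ.trace = 1

open Kronecker

/-- The partial-swap operator on two copies of `⊗ᵢ ℂ^(dᵢ)`: it swaps the `k`-th factor of
the first copy with the `k`-th factor of the second copy exactly for `k ∈ a`
(i.e. `s₁^(a₁) ⊗ ⋯ ⊗ sₙ^(aₙ)` with `a` the indicator bitstring of the set `a`). -/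
noncomputable def swapOp {n : ℕ} (d : Fin n → ℕ) (a : Finset (Fin n)) :
    Matrix ((((i : Fin n) → Fin (d i)) × ((i : Fin n) → Fin (d i))))
           ((((i : Fin n) → Fin (d i)) × ((i : Fin n) → Fin (d i)))) ℂ :=
  fun r c => if r = ((fun i => if i ∈ a then c.2 i else c.1 i),
                     (fun i => if i ∈ a then c.1 i else c.2 i)) then 1 else 0

/-- The generalized swap trick: for density matrices `ρ, σ` and any bitstring
`a ∈ {0,1}^n` (identified with the subset `S = supp a`),
`Tr[(s₁^(a₁) ⊗ ⋯ ⊗ sₙ^(aₙ))(ρ ⊗ σ)] = Tr(ρ_S σ_S)`. -/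
theorem swap_trick {n : ℕ} (d : Fin n → ℕ)
    (ρ σ : Matrix ((i : Fin n) → Fin (d i)) ((i : Fin n) → Fin (d i)) ℂ)
    (hρ : IsDensity ρ) (hσ : IsDensity σ) (a : Finset (Fin n)) :
    (swapOp d a * (ρ ⊗ₖ σ)).trace = overlap d a ρ σ := by
  classical
  simp only [overlap, Matrix.trace, Matrix.diag, Matrix.mul_apply]; unfold ptrace swapOp
  simp only [Matrix.trace, Matrix.diag, Matrix.mul_apply, Matrix.kroneckerMap_apply,
    ite_mul, one_mul, zero_mul]
  rw [Finset.sum_comm]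
  simp only [Finset.sum_ite_eq', Finset.mem_univ, if_true]
  set e := (Equiv.piEquivPiSubtypeProd (· ∈ a) fun i => Fin (d i)).symm with he
  simp only [Finset.sum_mul_sum]
  rw [← Equiv.sum_comp
    (⟨fun p => (e (p.1, p.2.2.1), e (p.2.1, p.2.2.2)),
      fun c => ((e.symm c.1).1, ((e.symm c.2).1, ((e.symm c.1).2, (e.symm c.2).2))),
      fun p => by simp, fun c => by simp⟩ :
      (((i : {j : Fin n // j ∈ a}) → Fin (d i.1)) ×
      (((i : {j : Fin n // j ∈ a}) → Fin (d i.1)) ×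
        (((i : {j : Fin n // j ∉ a}) → Fin (d i.1)) ×
          ((i : {j : Fin n // j ∉ a}) → Fin (d i.1))))) ≃
      (((i : Fin n) → Fin (d i)) × ((i : Fin n) → Fin (d i))))]
  simp only [Equiv.coe_fn_mk]
  simp only [Fintype.sum_prod_type]
  refine Finset.sum_congr rfl fun x _ => Finset.sum_congr rfl fun y _ =>
    Finset.sum_congr rfl fun z _ => Finset.sum_congr rfl fun w _ => ?_
  have h1 : (fun i => if i ∈ a then (e (y, w)) i else (e (x, z)) i)
      = fun i => if h : i ∈ a then y ⟨i, h⟩ else z ⟨i, h⟩ := by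
    funext i; by_cases h : i ∈ a <;> simp [h, he, Equiv.piEquivPiSubtypeProd]
  have h2 : (fun i => if i ∈ a then (e (x, z)) i else (e (y, w)) i)
      = fun i => if h : i ∈ a then x ⟨i, h⟩ else w ⟨i, h⟩ := by
    funext i; by_cases h : i ∈ a <;> simp [h, he, Equiv.piEquivPiSubtypeProd]
  have h3 : e (x, z) = fun i => if h : i ∈ a then x ⟨i, h⟩ else z ⟨i, h⟩ := by
    funext i; by_cases h : i ∈ a <;> simp [h, he, Equiv.piEquivPiSubtypeProd]
  have h4 : e (y, w) = fun i => if h : i ∈ a then y ⟨i, h⟩ else w ⟨i, h⟩ := by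
    funext i; by_cases h : i ∈ a <;> simp [h, he, Equiv.piEquivPiSubtypeProd]
  simp only [h1, h2, h3, h4]
  congr 1 <;> congr 1 <;> funext i <;> by_cases h : i ∈ a <;> simp [h]
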